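/- arXiv:2506.05525 — 6 statements merged into one kernel-verified Lean document; each statement's English description precedes it below -/
import Mathlib

section
/- For any monotone function g : C → C on a complete lattice C, the least fixpoint (in the function lattice C → C ordered pointwise) of the operator G defined by G(f) = λc. c ∨ f(g(c)) equals the function λc. ⋁_{n∈ℕ} gⁿ(c), provided g is ω-continuous (or additive). Consequently the Kleene star r* can be encoded as the KAF fixpoint μX.(1 ⊕ r;X). -/
/-- Knaster–Tarski least fixpoint of an operator on the function lattice. -/
noncomputable def funLfp {C : Type*} [CompleteLattice C]
    (G : (C → C) → (C → C)) : C → C :=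
  sInf {f : C → C | G f ≤ f}

theorem star_as_fixpoint_right
    {C : Type*} [CompleteLattice C] (g : C → C) (hmono : Monotone g)
    (hadd : ∀ S : Set C, g (sSup S) = sSup (g '' S)) :
    funLfp (fun f : C → C => fun c => c ⊔ f (g c)) =
      fun c => ⨆ n : ℕ, g^[n] c := by
  apply le_antisymm
  · apply sInf_le
    intro c
    apply sup_le
    · exact le_iSup_of_le 0 (le_of_eq rfl)
    · apply iSup_le
      intro n
      refine le_iSup_of_le (n + 1) (le_of_eq ?_)
      rw [Function.iterate_succ_apply]
  · apply le_sInf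
    intro f hf c
    apply iSup_le
    intro n
    induction n generalizing c with
    | zero => exact le_trans le_sup_left (hf c)
    | succ n ih =>
      rw [Function.iterate_succ_apply]
      exact le_trans (le_trans (ih (g c)) le_sup_right) (hf c)
end

section
/- For an additive function g : C → C on a complete lattice C, the least fixpoint of the operator G'(f) = λc. c ∨ g(f(c)) (on C → C with pointwise order) equals λc. ⋁_{n∈ℕ} gⁿ(c). That is, for additive semantics the Kleene star r* can also be encoded as μX.(1 ⊕ X;r). -/
theorem star_as_fixpoint_left
    {C : Type*} [CompleteLattice C] (g : C → C)
    (hadd : ∀ S : Set C, g (sSup S) = sSup (g '' S)) :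
    funLfp (fun f : C → C => fun c => c ⊔ g (f c)) =
      fun c => ⨆ n : ℕ, g^[n] c := by
  have hmono : Monotone g := by
    intro a b hab
    have h : g (sSup {a, b}) = sSup (g '' {a, b}) := hadd _
    simp only [Set.image_pair, sSup_pair, sup_eq_right.mpr hab] at h
    rw [h]; exact le_sup_left
  apply le_antisymm
  · apply sInf_le
    intro c
    simp only [sup_le_iff]
    constructor
    · exact le_iSup_of_le 0 (le_refl c)
    · have : g (⨆ n : ℕ, g^[n] c) = ⨆ n : ℕ, g (g^[n] c) := by
        rw [iSup, hadd, ← Set.range_comp]; rfl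
      rw [this]
      apply iSup_le
      intro n
      exact le_iSup_of_le (n + 1) (by rw [Function.iterate_succ_apply'])
  · apply le_sInf
    intro f hf c
    have hf' : ∀ x, x ⊔ g (f x) ≤ f x := hf
    apply iSup_le
    intro n
    induction n with
    | zero => exact le_trans le_sup_left (hf' c)
    | succ n ih =>
      rw [Function.iterate_succ_apply']
      exact le_trans (le_trans (hmono ih) le_sup_right) (hf' c)
end

section
/- There exists a monotone but non-additive function u on a powerset lattice for which the encoding of Kleene star via μX.(1 ⊕ X;u) is strictly larger than the true iteration: concretely, for U = {a,b,c} and u : 𝒫(U) → 𝒫(U) with u({a,b}) = u(U) = U and u(S) = {b} for every other S, one has ⋁_{n∈ℕ} uⁿ({a}) = {a,b}, while lfp(λf. λS. S ∪ u(f(S))) applied to {a} equals U. -/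
open Classical in
/-- The counterexample function on 𝒫({a,b,c}) with a = 0, b = 1, c = 2. -/
noncomputable def uFun (S : Set (Fin 3)) : Set (Fin 3) :=
  if S = {0, 1} ∨ S = Set.univ then Set.univ else {1}

lemma above01 (S : Set (Fin 3)) (h : ({0,1} : Set (Fin 3)) ⊆ S) :
    S = {0,1} ∨ S = Set.univ := by
  by_cases h2 : (2 : Fin 3) ∈ S
  · right
    ext x
    simp only [Set.mem_univ, iff_true]
    fin_cases x
    · exact h (by simp)
    · exact h (by simp)
    · exact h2
  · left
    ext x
    constructor
    · intro hx
      fin_cases x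
      · simp
      · simp
      · exact absurd hx h2
    · intro hx; exact h hx
  
lemma one_mem_uFun (S : Set (Fin 3)) : (1 : Fin 3) ∈ uFun S := by
  unfold uFun; split <;> simp

lemma uFun_mono : Monotone uFun := by
  intro S T hST
  unfold uFun
  split
  · rename_i h
    rcases h with h | h
    · rcases above01 T (h ▸ hST) with h' | h' <;> simp [h']
    · have : T = Set.univ := Set.eq_univ_of_univ_subset (h ▸ hST)
      simp [this]
  · split <;> simp

lemma ne01 : ({0} : Set (Fin 3)) ≠ {0,1} := by
  intro h
  have : (1 : Fin 3) ∈ ({0} : Set (Fin 3)) := h ▸ (by simp)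
  simp at this

lemma neuniv0 : ({0} : Set (Fin 3)) ≠ Set.univ := by
  intro h
  have : (1 : Fin 3) ∈ ({0} : Set (Fin 3)) := h ▸ (by simp)
  simp at this

lemma ne01' : ({1} : Set (Fin 3)) ≠ {0,1} := by
  intro h
  have : (0 : Fin 3) ∈ ({1} : Set (Fin 3)) := h ▸ (by simp)
  simp at this

lemma neuniv1 : ({1} : Set (Fin 3)) ≠ Set.univ := by
  intro h
  have : (0 : Fin 3) ∈ ({1} : Set (Fin 3)) := h ▸ (by simp)
  simp at this

lemma uFun0 : uFun {0} = {1} := by unfold uFun; rw [if_neg]; push_neg; exact ⟨ne01, neuniv0⟩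
lemma uFun1 : uFun {1} = {1} := by unfold uFun; rw [if_neg]; push_neg; exact ⟨ne01', neuniv1⟩

lemma iter_uFun (n : ℕ) (hn : 1 ≤ n) : uFun^[n] {0} = {1} := by
  induction n with
  | zero => omega
  | succ k ih =>
    rcases Nat.eq_or_lt_of_le hn with h | h
    · simp [← h, uFun0]
    · rw [Function.iterate_succ_apply', ih (by omega), uFun1]

theorem nonadditive_star_encoding_fails :
    Monotone uFun ∧
    ¬ (∀ S : Set (Set (Fin 3)), uFun (sSup S) = sSup (uFun '' S)) ∧
    (⨆ n : ℕ, uFun^[n] {0}) = ({0, 1} : Set (Fin 3)) ∧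
    sInf {f : Set (Fin 3) → Set (Fin 3) |
        (fun S => S ∪ uFun (f S)) ≤ f} {0} = Set.univ := by
  refine ⟨uFun_mono, ?_, ?_, ?_⟩
  · intro h
    have h' := h {{0}, {1}}
    have hsup : sSup ({{0}, {1}} : Set (Set (Fin 3))) = ({0,1} : Set (Fin 3)) := by
      simp [Set.sSup_eq_sUnion, Set.sUnion_pair, Set.union_comm]
      ext x; simp [or_comm]
    rw [hsup] at h'
    have hl : uFun ({0,1} : Set (Fin 3)) = Set.univ := by unfold uFun; simp
    have hr : sSup (uFun '' ({{0}, {1}} : Set (Set (Fin 3)))) = ({1} : Set (Fin 3)) := by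
      rw [Set.image_pair, uFun0, uFun1]
      simp [Set.sSup_eq_sUnion]
    rw [hl, hr] at h'
    exact neuniv1 h'.symm
  · ext x
    simp only [Set.mem_iUnion, Set.iSup_eq_iUnion]
    constructor
    · rintro ⟨n, hn⟩
      rcases Nat.eq_zero_or_pos n with h | h
      · subst h; simp at hn; simp [hn]
      · rw [iter_uFun n h] at hn
        simp at hn; simp [hn]
    · intro hx
      rcases hx with h | h
      · exact ⟨0, by simp [h]⟩
      · exact ⟨1, by simp [uFun0, h]⟩
  · apply Set.eq_univ_of_univ_subset
    have : sInf {f : Set (Fin 3) → Set (Fin 3) |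
        (fun S => S ∪ uFun (f S)) ≤ f} {0} =
        ⨅ f ∈ {f : Set (Fin 3) → Set (Fin 3) | (fun S => S ∪ uFun (f S)) ≤ f}, f {0} := by
      rw [sInf_apply, iInf_subtype']
    rw [this]
    refine le_iInf₂ ?_
    intro f hf
    have h0 := hf {0}
    simp only [Set.le_eq_subset] at h0
    have h01 : ({0,1} : Set (Fin 3)) ⊆ f {0} := by
      intro x hx
      rcases hx with h | h
      · exact h0 (Or.inl h)
      · apply h0 (Or.inr _)
        simp at h; subst h
        exact one_mem_uFun _
    rcases above01 (f {0}) h01 with h | h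
    · have : uFun (f {0}) = Set.univ := by unfold uFun; simp [h]
      intro x _
      exact h0 (Or.inr (this ▸ Set.mem_univ x))
    · rw [h]
end

section
/- Equivalence adjunction: let L be a complete lattice and ∼ a compatible equivalence on L (each equivalence class is closed under joins of its non-empty subsets). Define 𝒫_∼(L) = {X ⊆ L | every equivalence class meets X in at most one point}, with X ≤_∼ Y iff for all x ∈ X there is y ∈ Y with x ∼ y and x ≤ y. Then ≤_∼ is a partial order, 𝒫_∼(L) is a complete lattice with join ⋁ W = α_∼(⋃ W) where α_∼(X) = {⋁(X ∩ [x]_∼) | x ∈ X}, and the pair (α_∼, γ_∼) with γ_∼(Y) = ⋃{[y]_∼ ∩ ↓y | y ∈ Y} is a Galois connection from 𝒫(L) (ordered by inclusion) to 𝒫_∼(L). -/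
variable {L : Type*}

/-- Carrier of the quotient-like domain: subsets containing at most one
representative of each equivalence class. -/
def EqCarrier (r : L → L → Prop) : Set (Set L) :=
  {X : Set L | ∀ x ∈ X, ∀ y ∈ X, r x y → x = y}

/-- The order on the equivalence-quotient domain. -/
def eqLe [Preorder L] (r : L → L → Prop) (X Y : Set L) : Prop :=
  ∀ x ∈ X, ∃ y ∈ Y, r x y ∧ x ≤ y

/-- The abstraction map of the equivalence adjunction. -/
def eqAlpha [CompleteLattice L] (r : L → L → Prop) (X : Set L) : Set L :=
  {z : L | ∃ x ∈ X, z = sSup (X ∩ {y : L | r y x})}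

/-- The concretization map of the equivalence adjunction. -/
def eqGamma [Preorder L] (r : L → L → Prop) (Y : Set L) : Set L :=
  {z : L | ∃ y ∈ Y, r z y ∧ z ≤ y}

/-- Compatibility: every equivalence class is closed under joins of
non-empty subsets. -/
def CompatibleEquiv [CompleteLattice L] (r : L → L → Prop) : Prop :=
  Equivalence r ∧
    ∀ (x : L) (S : Set L), S.Nonempty → (∀ y ∈ S, r y x) → r (sSup S) x

theorem equivalence_adjunction [CompleteLattice L]
    (r : L → L → Prop) (hr : CompatibleEquiv r) :
    -- ≤_∼ is a partial order on the carrier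
    (∀ X : Set L, eqLe r X X) ∧
    (∀ X ∈ EqCarrier r, ∀ Y ∈ EqCarrier r,
      eqLe r X Y → eqLe r Y X → X = Y) ∧
    (∀ X Y Z : Set L, eqLe r X Y → eqLe r Y Z → eqLe r X Z) ∧
    -- the abstraction lands in the carrier
    (∀ X : Set L, eqAlpha r X ∈ EqCarrier r) ∧
    -- complete lattice structure: joins are given by `eqAlpha` of unions
    (∀ W : Set (Set L), (∀ X ∈ W, X ∈ EqCarrier r) →
      (∀ X ∈ W, eqLe r X (eqAlpha r (⋃₀ W))) ∧
      (∀ Z ∈ EqCarrier r, (∀ X ∈ W, eqLe r X Z) →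
        eqLe r (eqAlpha r (⋃₀ W)) Z)) ∧
    -- Galois connection
    (∀ X : Set L, ∀ Y ∈ EqCarrier r,
      (eqLe r (eqAlpha r X) Y ↔ X ⊆ eqGamma r Y)) := by
  obtain ⟨heq, hsup⟩ := hr
  -- helper: sSup of class-slice is related to the representative
  have hslice : ∀ (X : Set L) (x : L), x ∈ X →
      r (sSup (X ∩ {y : L | r y x})) x ∧ x ≤ sSup (X ∩ {y : L | r y x}) := by
    intro X x hx
    have hxm : x ∈ X ∩ {y : L | r y x} := ⟨hx, heq.refl x⟩
    exact ⟨hsup x _ ⟨x, hxm⟩ (fun y hy => hy.2), le_sSup hxm⟩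
  refine ⟨?_, ?_, ?_, ?_, ?_, ?_⟩
  · intro X x hx; exact ⟨x, hx, heq.refl x, le_rfl⟩
  · intro X hX Y hY hXY hYX
    apply Set.Subset.antisymm
    · intro x hx
      obtain ⟨y, hy, hrxy, hxy⟩ := hXY x hx
      obtain ⟨x', hx', hryx', hyx'⟩ := hYX y hy
      have : x = x' := hX x hx x' hx' (heq.trans hrxy hryx')
      subst this
      exact le_antisymm hxy hyx' ▸ hy
    · intro y hy
      obtain ⟨x, hx, hryx, hyx⟩ := hYX y hy
      obtain ⟨y', hy', hrxy', hxy'⟩ := hXY x hx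
      have : y = y' := hY y hy y' hy' (heq.trans hryx hrxy')
      subst this
      exact le_antisymm hyx hxy' ▸ hx
  · intro X Y Z hXY hYZ x hx
    obtain ⟨y, hy, h1, h2⟩ := hXY x hx
    obtain ⟨z, hz, h3, h4⟩ := hYZ y hy
    exact ⟨z, hz, heq.trans h1 h3, le_trans h2 h4⟩
  · intro X z1 hz1 z2 hz2 hr12
    obtain ⟨x1, hx1, rfl⟩ := hz1
    obtain ⟨x2, hx2, rfl⟩ := hz2
    have h1 := (hslice X x1 hx1).1
    have h2 := (hslice X x2 hx2).1
    have hx12 : r x1 x2 := heq.trans (heq.symm h1) (heq.trans hr12 h2)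
    have : X ∩ {y : L | r y x1} = X ∩ {y : L | r y x2} := by
      ext y
      exact ⟨fun ⟨h, h'⟩ => ⟨h, heq.trans h' hx12⟩,
             fun ⟨h, h'⟩ => ⟨h, heq.trans h' (heq.symm hx12)⟩⟩
    rw [this]
  · intro W hW
    constructor
    · intro X hXW x hx
      have hxU : x ∈ ⋃₀ W := ⟨X, hXW, hx⟩
      obtain ⟨h1, h2⟩ := hslice (⋃₀ W) x hxU
      exact ⟨_, ⟨x, hxU, rfl⟩, heq.symm h1, h2⟩
    · intro Z hZ hle z hz
      obtain ⟨x, hxU, rfl⟩ := hz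
      obtain ⟨X, hXW, hxX⟩ := hxU
      obtain ⟨w, hw, hrxw, hxw⟩ := hle X hXW x hxX
      refine ⟨w, hw, ?_, ?_⟩
      · exact heq.trans (hslice (⋃₀ W) x ⟨X, hXW, hxX⟩).1 hrxw
      · apply sSup_le
        intro u hu
        obtain ⟨⟨X', hX'W, huX'⟩, hrux⟩ := hu
        obtain ⟨w', hw', hruw', huw'⟩ := hle X' hX'W u huX'
        have : w = w' := hZ w hw w' hw'
          (heq.trans (heq.symm hrxw) (heq.trans (heq.symm hrux) hruw'))
        exact this ▸ huw'
  · intro X Y hY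
    constructor
    · intro h x hx
      obtain ⟨y, hy, hrzy, hzy⟩ := h _ ⟨x, hx, rfl⟩
      obtain ⟨h1, h2⟩ := hslice X x hx
      exact ⟨y, hy, heq.trans (heq.symm h1) hrzy, le_trans h2 hzy⟩
    · intro h z hz
      obtain ⟨x, hx, rfl⟩ := hz
      obtain ⟨y, hy, hrxy, hxy⟩ := h hx
      refine ⟨y, hy, heq.trans (hslice X x hx).1 hrxy, ?_⟩
      apply sSup_le
      intro u hu
      obtain ⟨huX, hrux⟩ := hu
      obtain ⟨y', hy', hruy', huy'⟩ := h huX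
      have : y = y' := hY y hy y' hy'
        (heq.trans (heq.symm hrxy) (heq.trans (heq.symm hrux) hruy'))
      exact this ▸ huy'
end

section
/- Antisymmetry of the equivalence-quotient order: for a complete lattice L and compatible equivalence ∼, the relation X ≤_∼ Y on 𝒫_∼(L) (for all x ∈ X there is y ∈ Y with x ∼ y and x ≤ y) is antisymmetric: if X ≤_∼ Y and Y ≤_∼ X then X = Y. -/
variable {L : Type*}

theorem eqLe_antisymm [CompleteLattice L]
    (r : L → L → Prop) (hr : CompatibleEquiv r)
    (X : Set L) (hX : X ∈ EqCarrier r) (Y : Set L) (hY : Y ∈ EqCarrier r)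
    (hXY : eqLe r X Y) (hYX : eqLe r Y X) : X = Y := by
  obtain ⟨heq, -⟩ := hr
  have key : ∀ A B : Set L, A ∈ EqCarrier r → eqLe r A B → eqLe r B A → A ⊆ B := by
    intro A B hA hAB hBA x hx
    obtain ⟨y, hy, hrxy, hxy⟩ := hAB x hx
    obtain ⟨x', hx', hryx', hyx'⟩ := hBA y hy
    have : x = x' := hA x hx x' hx' (heq.trans hrxy hryx')
    have : x = y := le_antisymm hxy (this ▸ hyx')
    exact this ▸ hy
  exact Set.Subset.antisymm (key X Y hX hXY hYX) (key Y X hY hYX hXY)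
end

section
/- Local completeness is implied by under-approximations with equal abstraction: given a Galois connection ⟨α,γ⟩ : C ⇄ A between complete lattices, a monotone f : C → C, and u, c ∈ C with u ≤ c and α(u) = α(c), local completeness of A for f at u (i.e., α(f(u)) = α(f(γ(α(u))))) implies local completeness of A for f at c (i.e., α(f(c)) = α(f(γ(α(c))))). -/
theorem local_completeness_convex
    {C A : Type*} [CompleteLattice C] [CompleteLattice A]
    (α : C → A) (γ : A → C) (gc : GaloisConnection α γ)
    (f : C → C) (hf : Monotone f) (u c : C) (huc : u ≤ c) (hα : α u = α c)
    (hlc : α (f u) = α (f (γ (α u)))) :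
    α (f c) = α (f (γ (α c))) := by
  apply le_antisymm
  · exact gc.monotone_l (hf (gc.le_u_l c))
  · rw [← hα, ← hlc]
    exact gc.monotone_l (hf huc)
end
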